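/- Let H_j denote the probabilists' Hermite polynomials, defined by H₀ = 1, H₁(x) = x, and H_{j+1}(x) = x·H_j(x) − H_j'(x). For every even integer j ≥ 2, the quantity α_j := (H_j(0) + j·H_{j−2}(0)) / √(2π·j!) satisfies α_j = (−1)^{(j−2)/2} · j·(j−2)! / ( (j/2)! · 2^{j/2} · √(2π·j!) ) and |α_j| ≤ j^{−5/4}. -/
import Mathlib

open Polynomial Nat
open scoped Nat

private lemma hermite_eval_zero_even (m : ℕ) :
    (Polynomial.hermite (2 * m)).eval 0 = (-1) ^ m * (2 * m - 1)‼ := by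
  rw [← Polynomial.coeff_zero_eq_eval_zero]
  simpa using Polynomial.coeff_hermite_explicit m 0

private lemma num_eq (n : ℕ) :
    (Polynomial.hermite (2 * n + 2)).eval 0
      + ((2 * n + 2 : ℕ) : ℤ) * (Polynomial.hermite (2 * n)).eval 0
      = (-1) ^ n * (2 * n - 1)‼ := by
  have h1 : (Polynomial.hermite (2 * (n + 1))).eval 0 = (-1) ^ (n + 1) * (2 * (n + 1) - 1)‼ :=
    hermite_eval_zero_even (n + 1)
  have h2 : (Polynomial.hermite (2 * n)).eval 0 = (-1) ^ n * (2 * n - 1)‼ :=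
    hermite_eval_zero_even n
  have e1 : 2 * (n + 1) - 1 = 2 * n + 1 := by omega
  have e2 : 2 * (n + 1) = 2 * n + 2 := by ring
  rw [e1, e2] at h1
  have hdf : (2 * n + 1)‼ = (2 * n + 1) * (2 * n - 1)‼ := by
    have := Nat.doubleFactorial_add_one (2 * n)
    simpa using this
  rw [h1, h2, hdf]
  push_cast
  ring

private lemma fact_two_mul (n : ℕ) : (2 * n)! = 2 ^ n * n ! * (2 * n - 1)‼ := by
  cases n with
  | zero => rfl
  | succ k =>
    have e1 : 2 * (k + 1) = (2 * k + 1) + 1 := by ring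
    have e2 : 2 * (k + 1) - 1 = 2 * k + 1 := by omega
    rw [e2, e1, Nat.factorial_eq_mul_doubleFactorial (2 * k + 1)]
    have : (2 * k + 1 + 1)‼ = 2 ^ (k + 1) * (k + 1)! := by
      have := Nat.doubleFactorial_two_mul (k + 1)
      rwa [(by ring : 2 * (k + 1) = 2 * k + 1 + 1)] at this
    rw [this]

private lemma df_sq_mul (n : ℕ) :
    ((2 * n - 1)‼) ^ 2 * 4 ^ n = (2 * n)! * Nat.centralBinom n := by
  have hne : (n ! * n !) ≠ 0 := by positivity
  apply Nat.eq_of_mul_eq_mul_right (Nat.pos_of_ne_zero hne)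
  have hcb : Nat.centralBinom n * (n ! * n !) = (2 * n)! := by
    have h := Nat.choose_mul_factorial_mul_factorial (show n ≤ 2 * n by omega)
    rw [show 2 * n - n = n from by omega] at h
    rw [Nat.centralBinom_eq_two_mul_choose, ← mul_assoc]
    exact h
  have h4 : (4 : ℕ) ^ n = 2 ^ n * 2 ^ n := by rw [← mul_pow]; norm_num
  calc ((2 * n - 1)‼) ^ 2 * 4 ^ n * (n ! * n !)
      = (2 ^ n * n ! * (2 * n - 1)‼) * (2 ^ n * n ! * (2 * n - 1)‼) := by rw [h4]; ring
    _ = (2 * n)! * (2 * n)! := by rw [← fact_two_mul]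
    _ = (2 * n)! * (Nat.centralBinom n * (n ! * n !)) := by rw [hcb]
    _ = (2 * n)! * Nat.centralBinom n * (n ! * n !) := by ring

private lemma cb_sq_bound : ∀ n : ℕ, (3 * n + 1) * (Nat.centralBinom n) ^ 2 ≤ 16 ^ n := by
  intro n
  induction n with
  | zero => simp [Nat.centralBinom]
  | succ k ih =>
    have h := Nat.succ_mul_centralBinom_succ k
    refine Nat.le_of_mul_le_mul_left ?_ (show 0 < (k + 1) ^ 2 by positivity)
    calc (k + 1) ^ 2 * ((3 * (k + 1) + 1) * Nat.centralBinom (k + 1) ^ 2)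
        = (3 * k + 4) * ((k + 1) * Nat.centralBinom (k + 1)) ^ 2 := by ring
      _ = (3 * k + 4) * (2 * (2 * k + 1) * Nat.centralBinom k) ^ 2 := by rw [h]
      _ = ((3 * k + 4) * (2 * k + 1) ^ 2) * (4 * Nat.centralBinom k ^ 2) := by ring
      _ ≤ (4 * (k + 1) ^ 2 * (3 * k + 1)) * (4 * Nat.centralBinom k ^ 2) := by
          apply Nat.mul_le_mul_right
          nlinarith
      _ = (k + 1) ^ 2 * (16 * ((3 * k + 1) * Nat.centralBinom k ^ 2)) := by ring
      _ ≤ (k + 1) ^ 2 * (16 * 16 ^ k) := by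
          apply Nat.mul_le_mul_left
          exact Nat.mul_le_mul_left _ ih
      _ = (k + 1) ^ 2 * 16 ^ (k + 1) := by rw [pow_succ]; ring

private lemma le_of_sq_le_sq'' {a b : ℝ} (hb : 0 ≤ b) (h : a ^ 2 ≤ b ^ 2) : a ≤ b := by
  nlinarith

/-- The `j`-th Hermite coefficient of the ReLU function (for `j ≥ 2`), expressed in terms of
the probabilists' Hermite polynomials `Polynomial.hermite` (defined by `H₀ = 1` and
`H_{j+1} = X·H_j − H_j'`, so `H₁(x) = x`). -/
noncomputable def reluHermiteCoeff (j : ℕ) : ℝ :=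
  ((((Polynomial.hermite j).eval 0 + (j : ℤ) * (Polynomial.hermite (j - 2)).eval 0 : ℤ)) : ℝ) /
    Real.sqrt (2 * Real.pi * (j.factorial : ℝ))

private lemma reluHermiteCoeff_eq (n : ℕ) :
    reluHermiteCoeff (2 * n + 2)
      = ((-1 : ℝ) ^ n * (((2 * n - 1)‼ : ℕ) : ℝ)) /
        Real.sqrt (2 * Real.pi * (((2 * n + 2).factorial : ℕ) : ℝ)) := by
  unfold reluHermiteCoeff
  rw [show 2 * n + 2 - 2 = 2 * n from by omega, num_eq n]
  push_cast
  ring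

private lemma factj_expand (n : ℕ) :
    (2 * n + 2)! = (2 * n + 2) * ((2 * n + 1) * (2 * n)!) := by
  have h : (2 * n + 1 + 1)! = (2 * n + 1 + 1) * ((2 * n + 1) * (2 * n)!) := by
    rw [Nat.factorial_succ, Nat.factorial_succ]
  rw [show 2 * n + 2 = 2 * n + 1 + 1 from by omega]
  exact h

set_option maxHeartbeats 1000000 in
/-- Corollary G.4: exact expression and `j^{−5/4}` decay of the ReLU
Hermite coefficients `α_j = (H_j(0) + j·H_{j−2}(0))/√(2π·j!)` for even `j ≥ 2`. -/
theorem relu_hermite_coeff_bound (j : ℕ) (hj : 2 ≤ j) (hje : Even j) :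
    reluHermiteCoeff j =
      (-1 : ℝ) ^ ((j - 2) / 2) * ((j : ℝ) * ((j - 2).factorial : ℝ)) /
        (((j / 2).factorial : ℝ) * 2 ^ (j / 2) * Real.sqrt (2 * Real.pi * (j.factorial : ℝ))) ∧
    |reluHermiteCoeff j| ≤ (j : ℝ) ^ (-(5 : ℝ) / 4) := by
  obtain ⟨m, hm⟩ := hje
  obtain ⟨n, rfl⟩ : ∃ n, j = 2 * n + 2 := ⟨m - 1, by omega⟩
  have hS : (0:ℝ) < Real.sqrt (2 * Real.pi * (((2 * n + 2).factorial : ℕ) : ℝ)) :=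
    Real.sqrt_pos.mpr (by positivity)
  have hfac : (2 * n + 2) * (2 * n)! = (2 * n - 1)‼ * ((n + 1)! * 2 ^ (n + 1)) := by
    rw [fact_two_mul n]
    have hh : (2 * n + 2) * 2 ^ n * n ! = (n + 1)! * 2 ^ (n + 1) := by
      rw [Nat.factorial_succ, pow_succ]
      ring
    calc (2 * n + 2) * (2 ^ n * n ! * (2 * n - 1)‼)
        = ((2 * n + 2) * 2 ^ n * n !) * (2 * n - 1)‼ := by ring
      _ = ((n + 1)! * 2 ^ (n + 1)) * (2 * n - 1)‼ := by rw [hh]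
      _ = _ := by ring
  have hfacR : ((2 * n + 2 : ℕ) : ℝ) * (((2 * n)! : ℕ) : ℝ)
      = (((2 * n - 1)‼ : ℕ) : ℝ) * ((((n + 1)! : ℕ) : ℝ) * 2 ^ (n + 1)) := by
    exact_mod_cast congrArg (Nat.cast : ℕ → ℝ) hfac
  have hBpos : (0:ℝ) < (((n + 1)! : ℕ) : ℝ) * 2 ^ (n + 1) := by positivity
  constructor
  · -- exact formula
    rw [reluHermiteCoeff_eq n,
      show (2 * n + 2 - 2) / 2 = n from by omega,
      show 2 * n + 2 - 2 = 2 * n from by omega,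
      show (2 * n + 2) / 2 = n + 1 from by omega]
    rw [div_eq_div_iff hS.ne' (mul_ne_zero hBpos.ne' hS.ne')]
    rw [hfacR]
    ring
  · -- bound
    rw [reluHermiteCoeff_eq n]
    rw [abs_div, abs_mul, abs_pow, abs_neg, abs_one, one_pow, one_mul,
      abs_of_nonneg (by positivity : (0:ℝ) ≤ (((2 * n - 1)‼ : ℕ) : ℝ)),
      abs_of_nonneg hS.le]
    have hj0 : (0:ℝ) < ((2 * n + 2 : ℕ) : ℝ) := by positivity
    have hrw : ((2 * n + 2 : ℕ) : ℝ) ^ (-(5 : ℝ) / 4)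
        = (((2 * n + 2 : ℕ) : ℝ) ^ ((5:ℝ)/4))⁻¹ := by
      rw [show (-(5:ℝ)/4) = -((5:ℝ)/4) by norm_num, Real.rpow_neg hj0.le]
    rw [hrw, div_le_iff₀ hS, inv_mul_eq_div, le_div_iff₀ (Real.rpow_pos_of_pos hj0 _)]
    apply Real.le_sqrt_of_sq_le
    have hsq : ((((2 * n - 1)‼ : ℕ) : ℝ) * ((2 * n + 2 : ℕ) : ℝ) ^ ((5:ℝ)/4)) ^ 2
        = (((2 * n - 1)‼ : ℕ) : ℝ) ^ 2
          * (((2 * n + 2 : ℕ) : ℝ) ^ 2 * Real.sqrt ((2 * n + 2 : ℕ) : ℝ)) := by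
      rw [mul_pow, ← Real.rpow_natCast (((2 * n + 2 : ℕ) : ℝ) ^ ((5:ℝ)/4)) 2,
        ← Real.rpow_mul hj0.le,
        show ((5:ℝ)/4 * ((2:ℕ):ℝ)) = ((2:ℕ):ℝ) + 1/2 by push_cast; norm_num,
        Real.rpow_add hj0, Real.rpow_natCast, ← Real.sqrt_eq_rpow]
    rw [hsq]
    have hL2 : (((2 * n - 1)‼ : ℕ) : ℝ) ^ 2 * 4 ^ n
        = (((2 * n)! : ℕ) : ℝ) * ((Nat.centralBinom n : ℕ) : ℝ) := by
      exact_mod_cast df_sq_mul n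
    have hL3 : (3 * (n:ℝ) + 1) * ((Nat.centralBinom n : ℕ) : ℝ) ^ 2 ≤ 16 ^ n := by
      exact_mod_cast cb_sq_bound n
    have hC : (0:ℝ) ≤ ((Nat.centralBinom n : ℕ) : ℝ) := by positivity
    have hkey : ((Nat.centralBinom n : ℕ) : ℝ) * Real.sqrt (3 * (n:ℝ) + 1) ≤ 4 ^ n := by
      apply le_of_sq_le_sq'' (by positivity)
      have hh : (((Nat.centralBinom n : ℕ) : ℝ) * Real.sqrt (3 * (n:ℝ) + 1)) ^ 2
          = (3 * (n:ℝ) + 1) * ((Nat.centralBinom n : ℕ) : ℝ) ^ 2 := by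
        rw [mul_pow, Real.sq_sqrt (by positivity)]
        ring
      rw [hh]
      calc (3 * (n:ℝ) + 1) * ((Nat.centralBinom n : ℕ) : ℝ) ^ 2 ≤ 16 ^ n := hL3
        _ = ((4:ℝ) ^ n) ^ 2 := by
            rw [show (16:ℝ) = 4 ^ 2 by norm_num, ← pow_mul, ← pow_mul, mul_comm]
    have hfacjR : (((2 * n + 2)! : ℕ) : ℝ)
        = ((2 * n + 2 : ℕ) : ℝ) * (((2 * n + 1 : ℕ) : ℝ) * (((2 * n)! : ℕ) : ℝ)) := by
      exact_mod_cast congrArg (Nat.cast : ℕ → ℝ) (factj_expand n)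
    have hpi : (3:ℝ) ≤ Real.pi := Real.pi_gt_three.le
    have hn0 : (0:ℝ) ≤ (n:ℝ) := Nat.cast_nonneg n
    have hanal : ((2 * n + 2 : ℕ) : ℝ) ^ 2 * Real.sqrt ((2 * n + 2 : ℕ) : ℝ)
        ≤ 2 * Real.pi * (((2 * n + 2 : ℕ) : ℝ) * ((2 * n + 1 : ℕ) : ℝ))
          * Real.sqrt (3 * (n:ℝ) + 1) := by
      apply le_of_sq_le_sq'' (by positivity)
      rw [mul_pow, mul_pow, Real.sq_sqrt hj0.le, Real.sq_sqrt (by positivity : (0:ℝ) ≤ 3 * (n:ℝ) + 1)]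
      have hjr : ((2 * n + 2 : ℕ) : ℝ) = 2 * (n:ℝ) + 2 := by push_cast; ring
      have h21 : ((2 * n + 1 : ℕ) : ℝ) = 2 * (n:ℝ) + 1 := by push_cast; ring
      rw [hjr, h21]
      have hcube : (2 * (n:ℝ) + 2) ^ 3 ≤ 36 * ((2 * (n:ℝ) + 1) ^ 2 * (3 * (n:ℝ) + 1)) := by
        nlinarith [pow_nonneg hn0 2, pow_nonneg hn0 3, hn0]
      have hpi2 : (9:ℝ) ≤ Real.pi ^ 2 := by nlinarith [hpi]
      have hK : (0:ℝ) ≤ (2 * (n:ℝ) + 2) ^ 2 * ((2 * (n:ℝ) + 1) ^ 2 * (3 * (n:ℝ) + 1)) := by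
        positivity
      
      calc ((2 * (n:ℝ) + 2) ^ 2) ^ 2 * (2 * (n:ℝ) + 2)
          = (2 * (n:ℝ) + 2) ^ 2 * (2 * (n:ℝ) + 2) ^ 3 := by ring
        _ ≤ (2 * (n:ℝ) + 2) ^ 2 * (36 * ((2 * (n:ℝ) + 1) ^ 2 * (3 * (n:ℝ) + 1))) := by
            apply mul_le_mul_of_nonneg_left hcube (by positivity)
        _ = 36 * ((2 * (n:ℝ) + 2) ^ 2 * ((2 * (n:ℝ) + 1) ^ 2 * (3 * (n:ℝ) + 1))) := by ring
        _ ≤ (4 * Real.pi ^ 2)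
              * ((2 * (n:ℝ) + 2) ^ 2 * ((2 * (n:ℝ) + 1) ^ 2 * (3 * (n:ℝ) + 1))) := by
            exact mul_le_mul_of_nonneg_right (by nlinarith [hpi2]) hK
        _ = (2 * Real.pi * ((2 * (n:ℝ) + 2) * (2 * (n:ℝ) + 1))) ^ 2 * (3 * (n:ℝ) + 1) := by
            ring
    have h4n : (0:ℝ) < (4:ℝ) ^ n := by positivity
    rw [hfacjR]
    have step : (((2 * n - 1)‼ : ℕ) : ℝ) ^ 2
          * (((2 * n + 2 : ℕ) : ℝ) ^ 2 * Real.sqrt ((2 * n + 2 : ℕ) : ℝ)) * 4 ^ n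
        ≤ 2 * Real.pi * (((2 * n + 2 : ℕ) : ℝ) * (((2 * n + 1 : ℕ) : ℝ) * (((2 * n)! : ℕ) : ℝ)))
          * 4 ^ n := by
      calc (((2 * n - 1)‼ : ℕ) : ℝ) ^ 2
            * (((2 * n + 2 : ℕ) : ℝ) ^ 2 * Real.sqrt ((2 * n + 2 : ℕ) : ℝ)) * 4 ^ n
          = ((((2 * n - 1)‼ : ℕ) : ℝ) ^ 2 * 4 ^ n)
            * (((2 * n + 2 : ℕ) : ℝ) ^ 2 * Real.sqrt ((2 * n + 2 : ℕ) : ℝ)) := by ring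
        _ = (((2 * n)! : ℕ) : ℝ) * (((Nat.centralBinom n : ℕ) : ℝ)
            * (((2 * n + 2 : ℕ) : ℝ) ^ 2 * Real.sqrt ((2 * n + 2 : ℕ) : ℝ))) := by
            rw [hL2]; ring
        _ ≤ (((2 * n)! : ℕ) : ℝ) * (((Nat.centralBinom n : ℕ) : ℝ)
            * (2 * Real.pi * (((2 * n + 2 : ℕ) : ℝ) * ((2 * n + 1 : ℕ) : ℝ))
              * Real.sqrt (3 * (n:ℝ) + 1))) := by
            apply mul_le_mul_of_nonneg_left _ (by positivity)
            exact mul_le_mul_of_nonneg_left hanal hC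
        _ = (((2 * n)! : ℕ) : ℝ) * (2 * Real.pi * (((2 * n + 2 : ℕ) : ℝ) * ((2 * n + 1 : ℕ) : ℝ)))
            * (((Nat.centralBinom n : ℕ) : ℝ) * Real.sqrt (3 * (n:ℝ) + 1)) := by ring
        _ ≤ (((2 * n)! : ℕ) : ℝ) * (2 * Real.pi * (((2 * n + 2 : ℕ) : ℝ) * ((2 * n + 1 : ℕ) : ℝ)))
            * 4 ^ n := by
            apply mul_le_mul_of_nonneg_left hkey (by positivity)
        _ = 2 * Real.pi * (((2 * n + 2 : ℕ) : ℝ)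
            * (((2 * n + 1 : ℕ) : ℝ) * (((2 * n)! : ℕ) : ℝ))) * 4 ^ n := by ring
    have hfin := le_of_mul_le_mul_right step h4n
    linarith
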